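/- Integral descent bound for the loss-weighted gradient flow at a zero-loss minimizer: assume each ℓ_i is nonnegative and there is θ* ∈ E with ℓ_i(θ*) = 0 for every i. Let θ : [0,∞) → E be continuously differentiable with ∑_{j=1}^n ℓ_j(θ(u)) > 0 for all u ≥ 0 and θ′(u) = −∑_{i=1}^n p_i(u)·∇ℓ_i(θ(u)) where p_i(u) = ℓ_i(θ(u)) / ∑_{j=1}^n ℓ_j(θ(u)). Then for every S > 0, ∫₀^S ( ∑_{i=1}^n ℓ_i(θ(u))² ) / ( ∑_{j=1}^n ℓ_j(θ(u)) ) du ≤ (1/2)·‖θ(0) − θ*‖². -/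

import Mathlib

open scoped RealInnerProductSpace

lemma grad_ineq {E : Type*} [NormedAddCommGroup E] [InnerProductSpace ℝ E] [CompleteSpace E]
    {f : E → ℝ} {gr x y : E} (hc : ConvexOn ℝ Set.univ f)
    (hg : HasGradientAt f gr x) :
    f x + ⟪gr, y - x⟫ ≤ f y := by
  set ψ : ℝ → ℝ := fun t => f (x + t • (y - x)) with hψ
  have hle : ∀ t : ℝ, AffineMap.lineMap x y t = x + t • (y - x) := by
    intro t
    rw [AffineMap.lineMap_apply_module]
    module
  have hcψ : ConvexOn ℝ Set.univ ψ := by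
    have := hc.comp_affineMap (AffineMap.lineMap x y : ℝ →ᵃ[ℝ] E)
    have hfun : ψ = f ∘ AffineMap.lineMap x y := by
      ext t
      simp [ψ, hle t, Function.comp]
    rw [hfun]; simpa only [Set.preimage_univ] using this
  have hd : HasDerivAt ψ ⟪gr, y - x⟫ 0 := by
    have hline : HasDerivAt (fun t : ℝ => x + t • (y - x)) (y - x) 0 := by
      simpa using ((hasDerivAt_id (0:ℝ)).smul_const (y - x)).const_add x
    have hx0 : x + (0:ℝ) • (y - x) = x := by simp
    have hf' : HasFDerivAt f ((InnerProductSpace.toDual ℝ E) gr) (x + (0:ℝ) • (y - x)) := by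
      rw [hx0]; exact hg.hasFDerivAt
    have := hf'.comp_hasDerivAt 0 hline
    simp at this; exact this
  have := hcψ.le_slope_of_hasDerivAt (Set.mem_univ 0) (Set.mem_univ 1) one_pos hd
  rw [slope_def_field] at this
  simp only [ψ, zero_smul, add_zero, one_smul] at this
  have h1 : x + (y - x) = y := by abel
  rw [h1] at this
  linarith [this]

/-- Integral descent bound for the loss-weighted gradient flow at a zero-loss
minimizer. -/
theorem loss_weighted_gradient_flow_integral_bound
    {E : Type*} [NormedAddCommGroup E] [InnerProductSpace ℝ E] [CompleteSpace E]
    (n : ℕ) (hn : 1 ≤ n) (ℓ : Fin n → E → ℝ) (g : Fin n → E → E)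
    (hconv : ∀ i, ConvexOn ℝ Set.univ (ℓ i))
    (hgrad : ∀ i x, HasGradientAt (ℓ i) (g i x) x)
    (hnn : ∀ i x, 0 ≤ ℓ i x)
    (θs : E) (hzero : ∀ i, ℓ i θs = 0)
    (θ : ℝ → E)
    (hpos : ∀ u : ℝ, 0 ≤ u → 0 < ∑ j, ℓ j (θ u))
    (hθ : ∀ u : ℝ, 0 ≤ u →
      HasDerivAt θ (-(∑ i, (ℓ i (θ u) / ∑ j, ℓ j (θ u)) • g i (θ u))) u)
    (hC1 : ContinuousOn
      (fun u => -(∑ i, (ℓ i (θ u) / ∑ j, ℓ j (θ u)) • g i (θ u))) (Set.Ici 0)) :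
    ∀ S : ℝ, 0 < S →
      ∫ u in (0:ℝ)..S, (∑ i, (ℓ i (θ u)) ^ 2) / (∑ j, ℓ j (θ u)) ≤
        (1 / 2) * ‖θ 0 - θs‖ ^ 2 := by
  intro S hS
  set v : ℝ → E := fun u => -(∑ i, (ℓ i (θ u) / ∑ j, ℓ j (θ u)) • g i (θ u)) with hv
  set F : ℝ → ℝ := fun u => ⟪θ u - θs, θ u - θs⟫ with hFdef
  set F' : ℝ → ℝ := fun u => 2 * ⟪v u, θ u - θs⟫ with hF'def
  set h : ℝ → ℝ := fun u => (∑ i, (ℓ i (θ u)) ^ 2) / (∑ j, ℓ j (θ u)) with hhdef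
  have hIccIci : Set.Icc (0:ℝ) S ⊆ Set.Ici 0 := fun u hu => hu.1
  have hθcont : ContinuousOn θ (Set.Ici 0) := fun u hu =>
    (hθ u hu).continuousAt.continuousWithinAt
  -- derivative of F
  have hFderiv : ∀ u ∈ Set.uIcc (0:ℝ) S, HasDerivAt F (F' u) u := by
    intro u hu
    rw [Set.uIcc_of_le hS.le] at hu
    have hd := (hθ u hu.1).sub_const θs
    have := (HasDerivAt.inner ℝ (f := fun t => θ t - θs) (g := fun t => θ t - θs) hd hd)
    refine this.congr_deriv ?_
    simp only [F', v, real_inner_comm]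
    ring
  -- continuity of F'
  have hF'cont : ContinuousOn F' (Set.Icc 0 S) := by
    have : ContinuousOn (fun u => ⟪v u, θ u - θs⟫) (Set.Ici (0:ℝ)) :=
      ContinuousOn.inner hC1 (hθcont.sub continuousOn_const)
    exact (continuousOn_const.mul this).mono hIccIci
  have hF'int : IntervalIntegrable F' MeasureTheory.volume 0 S := by
    apply ContinuousOn.intervalIntegrable
    rwa [Set.uIcc_of_le hS.le]
  -- continuity of h
  have hℓcont : ∀ i, Continuous (ℓ i) := fun i =>
    continuous_iff_continuousAt.mpr fun x => (hgrad i x).hasFDerivAt.continuousAt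
  have hhcont : ContinuousOn h (Set.Icc 0 S) := by
    apply ContinuousOn.div
    · exact continuousOn_finset_sum _ fun i _ =>
        (((hℓcont i).comp_continuousOn (hθcont.mono hIccIci)).pow 2)
    · exact continuousOn_finset_sum _ fun i _ =>
        (hℓcont i).comp_continuousOn (hθcont.mono hIccIci)
    · intro u hu; exact (hpos u hu.1).ne'
  have hhint : IntervalIntegrable h MeasureTheory.volume 0 S := by
    apply ContinuousOn.intervalIntegrable
    rwa [Set.uIcc_of_le hS.le]
  -- pointwise bound : h u ≤ -(F' u) / 2
  have hptwise : ∀ u ∈ Set.Icc (0:ℝ) S, h u ≤ -(F' u) / 2 := by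
    intro u hu
    have hu0 : (0:ℝ) ≤ u := hu.1
    have hSpos := hpos u hu0
    have hinner : ⟪v u, θ u - θs⟫ = -∑ i, (ℓ i (θ u) / ∑ j, ℓ j (θ u)) * ⟪g i (θ u), θ u - θs⟫ := by
      simp [v, inner_neg_left, sum_inner, real_inner_smul_left]
    have hkey : ∀ i, ℓ i (θ u) ≤ ⟪g i (θ u), θ u - θs⟫ := by
      intro i
      have := grad_ineq (hconv i) (hgrad i (θ u)) (y := θs)
      rw [hzero i] at this
      have hneg : ⟪g i (θ u), θs - θ u⟫ = -⟪g i (θ u), θ u - θs⟫ := by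
        rw [← inner_neg_right]; congr 1; abel
      rw [hneg] at this
      linarith
    have hsum_le : h u ≤ ∑ i, (ℓ i (θ u) / ∑ j, ℓ j (θ u)) * ⟪g i (θ u), θ u - θs⟫ := by
      have h1 : h u = ∑ i, (ℓ i (θ u) / ∑ j, ℓ j (θ u)) * ℓ i (θ u) := by
        simp only [hhdef]; rw [Finset.sum_div]
        exact Finset.sum_congr rfl fun i _ => by rw [div_mul_eq_mul_div, sq]
      rw [h1]
      apply Finset.sum_le_sum
      intro i _
      exact mul_le_mul_of_nonneg_left (hkey i) (div_nonneg (hnn i _) hSpos.le)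
    have : ⟪v u, θ u - θs⟫ ≤ -h u := by rw [hinner]; linarith
    simp only [hF'def]
    linarith
  -- FTC and conclusion
  have hFTC : ∫ u in (0:ℝ)..S, F' u = F S - F 0 :=
    intervalIntegral.integral_eq_sub_of_hasDerivAt hFderiv hF'int
  have hmono : ∫ u in (0:ℝ)..S, h u ≤ ∫ u in (0:ℝ)..S, -(F' u) / 2 := by
    apply intervalIntegral.integral_mono_on hS.le hhint
    · exact (hF'int.neg.div_const 2)
    · exact hptwise
  have hval : ∫ u in (0:ℝ)..S, -(F' u) / 2 = (F 0 - F S) / 2 := by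
    have : ∫ u in (0:ℝ)..S, -(F' u) / 2 = (∫ u in (0:ℝ)..S, F' u) * (-1/2) := by
      rw [← intervalIntegral.integral_mul_const]
      congr 1; ext u; ring
    rw [this, hFTC]; ring
  have hFS : 0 ≤ F S := real_inner_self_nonneg
  have hF0 : F 0 = ‖θ 0 - θs‖ ^ 2 := real_inner_self_eq_norm_sq _
  calc ∫ u in (0:ℝ)..S, h u ≤ (F 0 - F S) / 2 := by rw [← hval]; exact hmono
    _ ≤ F 0 / 2 := by linarith
    _ = (1/2) * ‖θ 0 - θs‖ ^ 2 := by rw [hF0]; ring
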